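/- Let f: ℝⁿ → ℝ be twice continuously differentiable and concave, and let B̄ be a symmetric negative definite matrix with B̄ ≤ ∇²f(β) (Loewner ordering) for all β. Then for all β, f(β - B̄⁻¹∇f(β)) ≥ f(β), with equality only if ∇f(β) = 0. -/

import Mathlib

lemma taylor_quad_lb (ψ ψ1 ψ2 : ℝ → ℝ) (c : ℝ)
    (h1 : ∀ t, HasDerivAt ψ (ψ1 t) t)
    (h2 : ∀ t, HasDerivAt ψ1 (ψ2 t) t)
    (hc : ∀ t, c ≤ ψ2 t) :
    ψ 0 + ψ1 0 + c / 2 ≤ ψ 1 := by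
  have hmono : Monotone (fun t => ψ1 t - c * t) := by
    have hd : ∀ t : ℝ, HasDerivAt (fun t => ψ1 t - c * t) (ψ2 t - c) t := by
      intro t
      exact ((h2 t).sub ((hasDerivAt_id t).const_mul c)).congr_deriv (by ring)
    apply monotone_of_deriv_nonneg
    · exact fun t => (hd t).differentiableAt
    · intro t
      rw [(hd t).deriv]
      linarith [hc t]
  have hψ1 : ∀ t : ℝ, 0 ≤ t → ψ1 0 + c * t ≤ ψ1 t := by
    intro t ht
    have := hmono ht
    simp only at this
    linarith
  set u : ℝ → ℝ := fun t => ψ t - ψ1 0 * t - c * t ^ 2 / 2 with hu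
  have hud : ∀ t : ℝ, HasDerivAt u (ψ1 t - ψ1 0 - c * t) t := by
    intro t
    have h3 : HasDerivAt (fun t : ℝ => c * t ^ 2 / 2) (c * t) t := by
      have := (((hasDerivAt_pow 2 t).const_mul c).div_const 2)
      simpa [mul_comm, mul_assoc, mul_div_assoc] using this
    have := ((h1 t).sub ((hasDerivAt_id t).const_mul (ψ1 0))).sub h3
    exact this.congr_deriv (by ring)
  have humono : MonotoneOn u (Set.Ici (0 : ℝ)) := by
    apply monotoneOn_of_deriv_nonneg (convex_Ici 0)
    · exact fun t _ => (hud t).differentiableAt.continuousAt.continuousWithinAt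
    · exact fun t _ => (hud t).differentiableAt.differentiableWithinAt
    · intro t ht
      rw [interior_Ici] at ht
      rw [(hud t).deriv]
      have := hψ1 t (le_of_lt ht)
      linarith
  have := humono (Set.self_mem_Ici) (by simp : (1:ℝ) ∈ Set.Ici 0) zero_le_one
  simp only [hu] at this
  nlinarith [this]

open Matrix in
theorem stmt_16 {n : ℕ} (f : (Fin n → ℝ) → ℝ) (hf : ContDiff ℝ 2 f)
    (hconc : ConcaveOn ℝ Set.univ f)
    (B : Matrix (Fin n) (Fin n) ℝ) (hBsymm : B.IsSymm) (hBnd : (-B).PosDef)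
    (hLoe : ∀ (β v : Fin n → ℝ),
      v ⬝ᵥ B.mulVec v ≤ fderiv ℝ (fun x => fderiv ℝ f x v) β v) :
    ∀ β : Fin n → ℝ,
      f β ≤ f (β - B⁻¹.mulVec (fun i => fderiv ℝ f β (Pi.single i 1))) ∧
      (f (β - B⁻¹.mulVec (fun i => fderiv ℝ f β (Pi.single i 1))) = f β →
        (fun i => fderiv ℝ f β (Pi.single i 1)) = 0) := by
  intro β
  set g : Fin n → ℝ := fun i => fderiv ℝ f β (Pi.single i 1) with hg
  set δ : Fin n → ℝ := -(B⁻¹.mulVec g) with hδ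
  -- B is invertible
  have hdetB : IsUnit B.det := by
    have hpos := hBnd.det_pos
    rw [Matrix.det_neg] at hpos
    have : B.det ≠ 0 := by
      intro h
      rw [h] at hpos
      simp at hpos
    exact isUnit_iff_ne_zero.mpr this
  have hBδ : B.mulVec δ = -g := by
    rw [hδ, Matrix.mulVec_neg, Matrix.mulVec_mulVec, Matrix.mul_nonsing_inv B hdetB]
    simp
  -- differentiability facts
  have hf1 : Differentiable ℝ f := hf.differentiable (by norm_num)
  have hF : ContDiff ℝ 1 (fun x => fderiv ℝ f x δ) :=
    (hf.fderiv_right (by norm_num)).clm_apply contDiff_const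
  set γ : ℝ → (Fin n → ℝ) := fun t => β + t • δ with hγ
  have hγd : ∀ t : ℝ, HasDerivAt γ δ t := by
    intro t
    have := ((hasDerivAt_id t).smul_const δ).const_add β
    simpa [hγ] using this
  set ψ : ℝ → ℝ := fun t => f (γ t) with hψ
  set ψ1 : ℝ → ℝ := fun t => fderiv ℝ f (γ t) δ with hψ1
  set ψ2 : ℝ → ℝ := fun t => fderiv ℝ (fun x => fderiv ℝ f x δ) (γ t) δ with hψ2
  have hd1 : ∀ t : ℝ, HasDerivAt ψ (ψ1 t) t := fun t =>
    ((hf1 (γ t)).hasFDerivAt).comp_hasDerivAt t (hγd t)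
  have hd2 : ∀ t : ℝ, HasDerivAt ψ1 (ψ2 t) t := fun t =>
    ((hF.differentiable one_ne_zero (γ t)).hasFDerivAt).comp_hasDerivAt t (hγd t)
  set c : ℝ := δ ⬝ᵥ B.mulVec δ with hc
  have hcle : ∀ t : ℝ, c ≤ ψ2 t := fun t => hLoe (γ t) δ
  have key := taylor_quad_lb ψ ψ1 ψ2 c hd1 hd2 hcle
  -- compute ψ 0, ψ1 0, c
  have hγ0 : γ 0 = β := by simp [hγ]
  have hγ1 : γ 1 = β - B⁻¹.mulVec g := by
    simp [hγ, hδ, sub_eq_add_neg]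
  -- fderiv f β δ = δ ⬝ᵥ g
  set q : ℝ := g ⬝ᵥ B⁻¹.mulVec g with hq
  have hlin : fderiv ℝ f β δ = δ ⬝ᵥ g := by
    have := LinearMap.pi_apply_eq_sum_univ ((fderiv ℝ f β).toLinearMap) δ
    simp only [ContinuousLinearMap.coe_coe] at this
    rw [this]
    rw [dotProduct]
    apply Finset.sum_congr rfl
    intro i _
    rw [hg, smul_eq_mul]
    congr 2
    ext j
    simp [Pi.single_apply, eq_comm]
  have hδg : δ ⬝ᵥ g = -q := by
    rw [hδ, hq, neg_dotProduct, dotProduct_comm]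
  have hceq : c = q := by
    rw [hc, hBδ, dotProduct_neg, hδg]
    ring_nf
  have hψ10 : ψ1 0 = -q := by
    show fderiv ℝ f (γ 0) δ = -q
    rw [hγ0, hlin, hδg]
  -- q ≤ 0, with q < 0 unless g = 0
  have hBinv : (-B)⁻¹ = -(B⁻¹) := by
    apply Matrix.inv_eq_right_inv
    rw [Matrix.neg_mul, Matrix.mul_neg, neg_neg, Matrix.mul_nonsing_inv B hdetB]
  have hinvPD : (-(B⁻¹)).PosDef := hBinv ▸ hBnd.inv
  have hqneg : g ≠ 0 → q < 0 := by
    intro hgne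
    have h0 := hinvPD.dotProduct_mulVec_pos hgne
    simp only [star_trivial, Matrix.neg_mulVec, dotProduct_neg] at h0
    have : (0:ℝ) < -(g ⬝ᵥ B⁻¹.mulVec g) := by exact_mod_cast h0
    rw [hq]; linarith
  have hqle : q ≤ 0 := by
    by_cases hgz : g = 0
    · simp [hq, hgz]
    · exact le_of_lt (hqneg hgz)
  -- conclude
  have hmain : f β - q / 2 ≤ f (β - B⁻¹.mulVec g) := by
    have : ψ 0 = f β := by show f (γ 0) = f β; rw [hγ0]
    have h1' : ψ 1 = f (β - B⁻¹.mulVec g) := by show f (γ 1) = _; rw [hγ1]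
    rw [this, h1', hψ10, hceq] at key
    linarith
  constructor
  · linarith
  · intro heq
    by_contra hgne
    have := hqneg hgne
    rw [heq] at hmain
    linarith
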